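/- Let G be a finite group and α a U(1)-valued 2-cocycle on G. The number of α-regular conjugacy classes of G equals (1/|G|) · Σ_{g,g' ∈ G, gg'=g'g} α(g,g')/α(g',g). -/

import Mathlib

namespace CARAux

variable {G : Type*} [Group G]

noncomputable def Top (α : G → G → ℂ) (g : G) : (G → ℂ) →ₗ[ℂ] (G → ℂ) where
  toFun f := fun x => α x g * f (x * g)
  map_add' f₁ f₂ := by funext x; simp [mul_add]
  map_smul' c f := by funext x; simp [smul_eq_mul]; ring

variable {α : G → G → ℂ}

lemma alpha_ne (hnorm : ∀ g g', ‖α g g'‖ = 1) (g g' : G) : α g g' ≠ 0 := by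
  intro h; have := hnorm g g'; rw [h] at this; simp at this

lemma Top_mul (hcoc : ∀ g g' g'', α g g' * α (g * g') g'' = α g (g' * g'') * α g' g'')
    (g h : G) : Top α g * Top α h = α g h • Top α (g * h) := by
  apply LinearMap.ext; intro f
  funext x
  show α x g * (α (x * g) h * f (x * g * h)) = α g h * (α x (g * h) * f (x * (g * h)))
  rw [mul_assoc x g h]
  linear_combination f (x * (g * h)) * hcoc x g h

lemma Top_smul_inj (hnorm : ∀ g g', ‖α g g'‖ = 1) {c d : ℂ} {m : G}
    (h : c • Top α m = d • Top α m) : c = d := by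
  have h3 : c * (α 1 m * 1) = d * (α 1 m * 1) := congrFun (LinearMap.congr_fun h (fun _ => (1 : ℂ))) 1
  have h4 : α 1 m ≠ 0 := alpha_ne hnorm 1 m
  field_simp at h3
  exact h3

lemma alpha_one_right (hnorm : ∀ g g', ‖α g g'‖ = 1)
    (hcoc : ∀ g g' g'', α g g' * α (g * g') g'' = α g (g' * g'') * α g' g'')
    (g : G) : α g 1 = α 1 1 := by
  have h := hcoc g 1 1
  simp only [mul_one, one_mul] at h
  exact mul_left_cancel₀ (alpha_ne hnorm g 1) h

lemma alpha_one_left (hnorm : ∀ g g', ‖α g g'‖ = 1)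
    (hcoc : ∀ g g' g'', α g g' * α (g * g') g'' = α g (g' * g'') * α g' g'')
    (g : G) : α 1 g = α 1 1 := by
  have h := hcoc 1 1 g
  simp only [mul_one, one_mul] at h
  exact (mul_right_cancel₀ (alpha_ne hnorm 1 g) h).symm

lemma alpha_conj (hnorm : ∀ g g', ‖α g g'‖ = 1)
    (hcoc : ∀ g g' g'', α g g' * α (g * g') g'' = α g (g' * g'') * α g' g'')
    (x g k : G) (hgk : g * k = k * g) (hreg : α g k = α k g) :
    α (x * g * x⁻¹) (x * k * x⁻¹) = α (x * k * x⁻¹) (x * g * x⁻¹) := by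
  set Tx := Top α x with hTx
  set Tx' := Top α x⁻¹ with hTx'
  set Tg := Top α g with hTg
  set Tk := Top α k with hTk
  set T1 := Top α 1 with hT1
  -- T1 commutes with everything
  have h1m : ∀ m : G, T1 * Top α m = Top α m * T1 := by
    intro m
    rw [hT1, Top_mul hcoc, Top_mul hcoc, one_mul, mul_one,
      alpha_one_right hnorm hcoc m, alpha_one_left hnorm hcoc m]
  have hxx : Tx' * Tx = α x⁻¹ x • T1 := by
    rw [hTx', hTx, hT1, Top_mul hcoc, inv_mul_cancel]
  have hgk_op : Tg * Tk = Tk * Tg := by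
    rw [hTg, hTk, Top_mul hcoc, Top_mul hcoc, hgk, hreg]
  have mid : Tg * (T1 * Tk) = Tk * (T1 * Tg) := by
    rw [h1m k, ← mul_assoc, hgk_op, mul_assoc, ← h1m g]
  have main : (Tx * Tg * Tx') * (Tx * Tk * Tx') = (Tx * Tk * Tx') * (Tx * Tg * Tx') := by
    calc (Tx * Tg * Tx') * (Tx * Tk * Tx')
        = Tx * Tg * (Tx' * Tx) * Tk * Tx' := by noncomm_ring
      _ = Tx * Tg * (α x⁻¹ x • T1) * Tk * Tx' := by rw [hxx]
      _ = α x⁻¹ x • (Tx * (Tg * (T1 * Tk)) * Tx') := by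
          simp only [mul_smul_comm, smul_mul_assoc, mul_assoc]
      _ = α x⁻¹ x • (Tx * (Tk * (T1 * Tg)) * Tx') := by rw [mid]
      _ = Tx * Tk * (α x⁻¹ x • T1) * Tg * Tx' := by
          simp only [mul_smul_comm, smul_mul_assoc, mul_assoc]
      _ = Tx * Tk * (Tx' * Tx) * Tg * Tx' := by rw [hxx]
      _ = (Tx * Tk * Tx') * (Tx * Tg * Tx') := by noncomm_ring
  -- evaluate both sides
  have E : ∀ u : G, Tx * Top α u * Tx' = (α x u * α (x * u) x⁻¹) • Top α (x * u * x⁻¹) := by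
    intro u
    rw [hTx, hTx', Top_mul hcoc, smul_mul_assoc, Top_mul hcoc, smul_smul]
  have hab : (x * g * x⁻¹) * (x * k * x⁻¹) = x * (g * k) * x⁻¹ := by group
  have hba : (x * k * x⁻¹) * (x * g * x⁻¹) = x * (k * g) * x⁻¹ := by group
  rw [E g, E k, smul_mul_assoc, mul_smul_comm, Top_mul hcoc, hab, smul_smul, smul_smul] at main
  rw [smul_mul_assoc, mul_smul_comm, Top_mul hcoc, hba, smul_smul, smul_smul, hgk] at main
  have key := Top_smul_inj hnorm main
  have hν1 : α x g * α (x * g) x⁻¹ ≠ 0 :=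
    mul_ne_zero (alpha_ne hnorm _ _) (alpha_ne hnorm _ _)
  have hν2 : α x k * α (x * k) x⁻¹ ≠ 0 :=
    mul_ne_zero (alpha_ne hnorm _ _) (alpha_ne hnorm _ _)
  apply mul_left_cancel₀ (mul_ne_zero hν1 hν2)
  linear_combination key


/-- multiplicativity of ε(g,·) on the centralizer, cleared form -/
lemma eps_mul (hnorm : ∀ g g', ‖α g g'‖ = 1)
    (hcoc : ∀ g g' g'', α g g' * α (g * g') g'' = α g (g' * g'') * α g' g'')
    {g h h' : G} (H : g * h = h * g) (H' : g * h' = h' * g) :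
    α g (h * h') / α (h * h') g = (α g h / α h g) * (α g h' / α h' g) := by
  have e1 := hcoc g h h'
  have e2 := hcoc h h' g
  have e3 := hcoc h g h'
  rw [show h * g = g * h from H.symm] at e3
  rw [show h' * g = g * h' from H'.symm] at e2
  have h4 : α h h' ≠ 0 := alpha_ne hnorm h h'
  have key : α h h' * (α g (h * h') * (α h g * α h' g)) =
      α h h' * (α (h * h') g * (α g h * α g h')) := by
    linear_combination (α g h * α h' g) * e3 - (α h g * α h' g) * e1 - (α g h * α g h') * e2
  have key2 := mul_left_cancel₀ h4 key
  have n1 : α (h * h') g ≠ 0 := alpha_ne hnorm _ _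
  have n2 : α h g ≠ 0 := alpha_ne hnorm _ _
  have n3 : α h' g ≠ 0 := alpha_ne hnorm _ _
  field_simp
  linear_combination key2

open Finset in
/-- the character sum over the centralizer -/
lemma char_sum [Fintype G] (hnorm : ∀ g g', ‖α g g'‖ = 1)
    (hcoc : ∀ g g' g'', α g g' * α (g * g') g'' = α g (g' * g'') * α g' g'')
    (g : G) [DecidablePred fun h => g * h = h * g] :
    (∑ g' : G, if g * g' = g' * g then α g g' / α g' g else 0) =
      if (∀ h, g * h = h * g → α g h = α h g)
        then ((univ.filter fun h => g * h = h * g).card : ℂ) else 0 := by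
  rw [← Finset.sum_filter]
  by_cases hreg : ∀ h, g * h = h * g → α g h = α h g
  · rw [if_pos hreg]
    rw [Finset.sum_congr rfl (fun h hh => ?_), Finset.sum_const, nsmul_eq_mul, mul_one]
    rw [Finset.mem_filter] at hh
    rw [hreg h hh.2, div_self (alpha_ne hnorm h g)]
  · rw [if_neg hreg]
    push_neg at hreg
    obtain ⟨h₀, hc₀, hne₀⟩ := hreg
    set S := ∑ h ∈ univ.filter fun h => g * h = h * g, α g h / α h g with hS
    have step1 : (α g h₀ / α h₀ g) * S = ∑ h ∈ univ.filter fun h => g * h = h * g,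
        α g (h₀ * h) / α (h₀ * h) g := by
      rw [hS, Finset.mul_sum]
      refine Finset.sum_congr rfl (fun h hh => ?_)
      rw [Finset.mem_filter] at hh
      exact (eps_mul hnorm hcoc hc₀ hh.2).symm
    have step2 : (∑ h ∈ univ.filter fun h => g * h = h * g,
        α g (h₀ * h) / α (h₀ * h) g) = S := by
      rw [hS]
      refine Finset.sum_nbij' (fun h => h₀ * h) (fun h => h₀⁻¹ * h) ?_ ?_ ?_ ?_ ?_
      · intro a ha
        simp only [Finset.mem_filter, Finset.mem_univ, true_and] at ha ⊢
        calc g * (h₀ * a) = (g * h₀) * a := by rw [mul_assoc]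
          _ = h₀ * (g * a) := by rw [hc₀, mul_assoc]
          _ = h₀ * a * g := by rw [ha, mul_assoc]
      · intro a ha
        simp only [Finset.mem_filter, Finset.mem_univ, true_and] at ha ⊢
        have hc₀' : g * h₀⁻¹ = h₀⁻¹ * g := by
          rw [eq_comm, inv_mul_eq_iff_eq_mul, ← mul_assoc, ← hc₀, mul_assoc, mul_inv_cancel,
            mul_one]
        calc g * (h₀⁻¹ * a) = (g * h₀⁻¹) * a := by rw [mul_assoc]
          _ = h₀⁻¹ * (g * a) := by rw [hc₀', mul_assoc]
          _ = h₀⁻¹ * a * g := by rw [ha, mul_assoc]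
      · intro a _; simp
      · intro a _; simp
      · intro a _; rfl
    have hstep : (α g h₀ / α h₀ g) * S = S := step1.trans step2
    have hne1 : α g h₀ / α h₀ g ≠ 1 := by
      intro h1
      exact hne₀ ((div_eq_one_iff_eq (alpha_ne hnorm h₀ g)).mp h1)
    have : (α g h₀ / α h₀ g - 1) * S = 0 := by linear_combination hstep
    rcases mul_eq_zero.mp this with h | h
    · exact absurd (by linear_combination h) hne1
    · exact h

lemma reg_conj (hnorm : ∀ g g', ‖α g g'‖ = 1)
    (hcoc : ∀ g g' g'', α g g' * α (g * g') g'' = α g (g' * g'') * α g' g'')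
    {g : G} (hreg : ∀ h, g * h = h * g → α g h = α h g) (x : G) :
    ∀ h, (x * g * x⁻¹) * h = h * (x * g * x⁻¹) → α (x * g * x⁻¹) h = α h (x * g * x⁻¹) := by
  intro h hh
  have hk : x * (x⁻¹ * h * x) * x⁻¹ = h := by group
  have hc : g * (x⁻¹ * h * x) = (x⁻¹ * h * x) * g := by
    have h2 : x⁻¹ * ((x * g * x⁻¹) * h) * x = x⁻¹ * (h * (x * g * x⁻¹)) * x := by rw [hh]
    calc g * (x⁻¹ * h * x) = x⁻¹ * ((x * g * x⁻¹) * h) * x := by group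
      _ = x⁻¹ * (h * (x * g * x⁻¹)) * x := h2
      _ = (x⁻¹ * h * x) * g := by group
  have h3 := alpha_conj hnorm hcoc x g (x⁻¹ * h * x) hc (hreg _ hc)
  rw [hk] at h3
  exact h3

open scoped Classical in
open Finset in
lemma card_cent_mul_card_class [Fintype G] (g : G) :
    ((univ.filter fun h => g * h = h * g).card) *
      ((univ.filter fun a => ConjClasses.mk a = ConjClasses.mk g).card) = Fintype.card G := by
  have horb := MulAction.card_orbit_mul_card_stabilizer_eq_card_group (ConjAct G) g
  have hG : Fintype.card (ConjAct G) = Fintype.card G :=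
    Fintype.card_congr ConjAct.ofConjAct.toEquiv
  have hstab : Fintype.card (MulAction.stabilizer (ConjAct G) g)
      = (univ.filter fun h => g * h = h * g).card := by
    rw [← Fintype.card_subtype]
    apply Fintype.card_congr
    exact (Equiv.subtypeEquiv ConjAct.toConjAct.toEquiv (fun h => by
      simp only [MulAction.mem_stabilizer_iff, ConjAct.smul_def, ConjAct.ofConjAct_toConjAct,
        MulEquiv.toEquiv_eq_coe, EquivLike.coe_coe]
      rw [mul_inv_eq_iff_eq_mul, eq_comm])).symm
  have horbc : Fintype.card (MulAction.orbit (ConjAct G) g)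
      = (univ.filter fun a => ConjClasses.mk a = ConjClasses.mk g).card := by
    rw [← Fintype.card_subtype]
    apply Fintype.card_congr
    exact Equiv.subtypeEquivRight (fun a => by
      rw [ConjAct.mem_orbit_conjAct, ← ConjClasses.mk_eq_mk_iff_isConj])
  rw [hstab, horbc, hG] at horb
  rw [mul_comm]
  exact horb

end CARAux

open Finset

open scoped Classical in
/-- The number of α-regular conjugacy classes equals
(1/|G|)·Σ over commuting pairs of α(g,g')/α(g',g). -/
theorem card_alphaRegular_classes {G : Type*} [Group G] [Fintype G]
    (α : G → G → ℂ) (hnorm : ∀ g g', ‖α g g'‖ = 1)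
    (hcoc : ∀ g g' g'', α g g' * α (g * g') g'' = α g (g' * g'') * α g' g'') :
    (Nat.card {C : ConjClasses G //
        ∀ g : G, ConjClasses.mk g = C → ∀ h : G, g * h = h * g → α g h = α h g} : ℂ) =
      (Fintype.card G : ℂ)⁻¹ *
        ∑ g : G, ∑ g' : G, if g * g' = g' * g then α g g' / α g' g else 0 := by
  set P : ConjClasses G → Prop := fun C =>
    ∀ g : G, ConjClasses.mk g = C → ∀ h : G, g * h = h * g → α g h = α h g with hP
  -- regularity is constant on conjugacy classes
  have hinvar : ∀ (g : G), (∀ h, g * h = h * g → α g h = α h g) → P (ConjClasses.mk g) := by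
    intro g hreg g' hg' h hcomm
    rw [ConjClasses.mk_eq_mk_iff_isConj] at hg'
    obtain ⟨x, hx⟩ := isConj_iff.mp hg'.symm
    subst hx
    exact CARAux.reg_conj hnorm hcoc hreg x h hcomm
  have fiber_lemma : ∀ C : ConjClasses G,
      (∑ g ∈ univ.filter fun a => ConjClasses.mk a = C,
        if (∀ h, g * h = h * g → α g h = α h g)
          then ((univ.filter fun h => g * h = h * g).card : ℂ) else 0) =
      if P C then (Fintype.card G : ℂ) else 0 := by
    intro C
    obtain ⟨g₀, hg₀⟩ := ConjClasses.exists_rep C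
    by_cases hPC : P C
    · rw [if_pos hPC]
      have hfcard : ((univ.filter fun a => ConjClasses.mk a = C).card : ℂ) ≠ 0 := by
        have : g₀ ∈ univ.filter fun a => ConjClasses.mk a = C := by
          simp [hg₀]
        simp only [ne_eq, Nat.cast_eq_zero, Finset.card_eq_zero]
        intro hemp
        rw [hemp] at this
        exact absurd this (Finset.notMem_empty g₀)
      rw [Finset.sum_congr rfl (fun g hg => ?_), Finset.sum_const, nsmul_eq_mul]
      · rw [mul_div_cancel₀ _ hfcard]
      · rw [Finset.mem_filter] at hg
        rw [if_pos (hPC g hg.2)]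
        have hcc := CARAux.card_cent_mul_card_class g
        rw [hg.2] at hcc
        have : ((univ.filter fun h => g * h = h * g).card : ℂ) *
            ((univ.filter fun a => ConjClasses.mk a = C).card : ℂ) = (Fintype.card G : ℂ) := by
          rw [← Nat.cast_mul, hcc]
        field_simp
        linear_combination this
    · rw [if_neg hPC]
      rw [Finset.sum_congr rfl (fun g hg => ?_), Finset.sum_const, smul_zero]
      rw [Finset.mem_filter] at hg
      rw [if_neg]
      intro hreg
      rw [← hg.2] at hPC
      exact hPC (hinvar g hreg)
  have main : (∑ g : G, ∑ g' : G, if g * g' = g' * g then α g g' / α g' g else 0) =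
      (Fintype.card G : ℂ) * (Nat.card {C : ConjClasses G // P C} : ℂ) := by
    calc ∑ g : G, ∑ g' : G, (if g * g' = g' * g then α g g' / α g' g else 0)
        = ∑ g : G, if (∀ h, g * h = h * g → α g h = α h g)
            then ((univ.filter fun h => g * h = h * g).card : ℂ) else 0 :=
          Finset.sum_congr rfl fun g _ => CARAux.char_sum hnorm hcoc g
      _ = ∑ C : ConjClasses G, ∑ g ∈ univ.filter fun a => ConjClasses.mk a = C,
            (if (∀ h, g * h = h * g → α g h = α h g)
              then ((univ.filter fun h => g * h = h * g).card : ℂ) else 0) :=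
          (Finset.sum_fiberwise univ ConjClasses.mk _).symm
      _ = ∑ C : ConjClasses G, if P C then (Fintype.card G : ℂ) else 0 :=
          Finset.sum_congr rfl fun C _ => fiber_lemma C
      _ = ((univ.filter P).card : ℂ) * (Fintype.card G : ℂ) := by
          rw [← Finset.sum_filter, Finset.sum_const, nsmul_eq_mul]
      _ = (Fintype.card G : ℂ) * (Nat.card {C : ConjClasses G // P C} : ℂ) := by
          rw [mul_comm, Nat.card_eq_fintype_card, Fintype.card_subtype]
  rw [main, inv_mul_cancel_left₀]
  exact Nat.cast_ne_zero.mpr Fintype.card_ne_zero
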